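/- Let K be a complete discrete valuation field of mixed characteristic, π a uniformizer, and fix compatible p-power roots π_n (π₀ = π, π_{n+1}^p = π_n), setting K_∞ = ∪_n K(π_n). Let 𝕂 be a complete unramified-closure type extension of K (i.e. 𝕂 = 𝕂₀·K with 𝕂₀/K₀ an extension obtained by perfecting the residue field, so 𝕂 ∩ K̄ contains K and 𝕂/K has trivial ramification). Then 𝕂 ∩ K_∞ = K, and consequently the subgroups G_𝕂 and G_{K_∞} together generate G_K as a topological group. -/

import Mathlib

open IntermediateField

lemma fixed_of_fixingSubgroup_aux {K Ω : Type*} [Field K] [Field Ω] [Algebra K Ω]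
    [IsAlgClosure K Ω] [CharZero K]
    (M : IntermediateField K Ω) (x : Ω) (hx : ∀ g ∈ M.fixingSubgroup, g x = x) : x ∈ M := by
  haveI : IsAlgClosed Ω := IsAlgClosure.isAlgClosed K
  haveI : Algebra.IsAlgebraic M Ω := Algebra.IsAlgebraic.tower_top (K := K) M
  haveI : IsAlgClosure M Ω := ⟨inferInstance, inferInstance⟩
  haveI : Normal M Ω := IsAlgClosure.normal M Ω
  haveI : CharZero Ω := charZero_of_injective_algebraMap (algebraMap K Ω).injective
  by_contra hxM
  have hint : IsIntegral M x := Algebra.IsIntegral.isIntegral x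
  have hsep : IsSeparable M x := (minpoly.irreducible hint).separable
  have hsp : ((minpoly M x).map (algebraMap M Ω)).Splits := IsAlgClosed.splits _
  have hnot : x ∉ (⊥ : Subalgebra M Ω) := by
    intro hb
    rw [Algebra.mem_bot] at hb
    obtain ⟨m, rfl⟩ := hb
    exact hxM m.2
  obtain ⟨y, hxy, hconj⟩ := (notMem_iff_exists_ne_and_isConjRoot hsep hsp).mp hnot
  obtain ⟨σ, hσ⟩ := hconj.symm.exists_algEquiv
  have hg := ((fixingSubgroupEquiv M).symm σ).2
  have h2 : σ x = x := hx _ hg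
  rw [h2] at hσ
  exact hxy hσ



/-- Let `K` be a complete discrete valuation field of mixed characteristic
`(0,p)`, `Ω` an algebraic closure of `K` carrying a valuation `v`, `π n` compatible `p`-power
roots of a uniformizer `π 0` of `K`, and `Kinf = ∪ₙ K(πₙ)` the Kummer tower, which is totally
ramified over `K` (every nontrivial subextension contains an element whose valuation is not a
valuation from `K`).  Let `L = 𝕂 ∩ K̄` be the algebraic part of the "unramified" extension
`𝕂` of `K`, so that all valuations of elements of `L` already occur on `K`.  Then
`L ∩ Kinf = K`, and consequently the fixing subgroups `G_𝕂 = Gal(Ω/L)` and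
`G_{Kinf} = Gal(Ω/Kinf)` together generate `G_K = Gal(Ω/K)` as a topological group
(their abstract join is dense for the Krull topology). -/
theorem stmt3 (p : ℕ) (hp : p.Prime)
    (K Ω : Type*) [Field K] [Field Ω] [Algebra K Ω] [IsAlgClosure K Ω] [CharZero K]
    {Γ : Type*} [LinearOrderedCommGroupWithZero Γ]
    (v : Valuation Ω Γ)
    (π : ℕ → Ω)
    (hπ0 : π 0 ∈ (algebraMap K Ω).range)
    (hπunif : π 0 ≠ 0 ∧ v (π 0) < 1)
    (hπ : ∀ n : ℕ, π (n + 1) ^ p = π n)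
    (Kinf : IntermediateField K Ω)
    (hKinf : Kinf = IntermediateField.adjoin K (Set.range π))
    (L : IntermediateField K Ω)
    -- `L` is unramified over `K`: its value group is that of `K`:
    (hunram : ∀ x ∈ L, x ≠ 0 → ∃ y : K, y ≠ 0 ∧ v x = v (algebraMap K Ω y))
    -- `Kinf` is totally ramified over `K`:
    (htotram : ∀ M : IntermediateField K Ω, M ≤ Kinf → M ≠ ⊥ →
      ∃ x ∈ M, x ≠ 0 ∧ ∀ y : K, y ≠ 0 → v x ≠ v (algebraMap K Ω y)) :
    L ⊓ Kinf = ⊥ ∧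
    closure ((Subgroup.closure
        ((L.fixingSubgroup : Set (Ω ≃ₐ[K] Ω)) ∪ (Kinf.fixingSubgroup : Set (Ω ≃ₐ[K] Ω)))
        : Subgroup (Ω ≃ₐ[K] Ω)) : Set (Ω ≃ₐ[K] Ω)) = Set.univ := by
  have hbot : L ⊓ Kinf = ⊥ := by
    by_contra h
    obtain ⟨x, hxM, hx0, hval⟩ := htotram (L ⊓ Kinf) inf_le_right h
    obtain ⟨y, hy0, hvy⟩ := hunram x hxM.1 hx0
    exact hval y hy0 hvy
  refine ⟨hbot, ?_⟩
  set S : Subgroup (Ω ≃ₐ[K] Ω) := Subgroup.closure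
      ((L.fixingSubgroup : Set (Ω ≃ₐ[K] Ω)) ∪ (Kinf.fixingSubgroup : Set (Ω ≃ₐ[K] Ω))) with hS
  have hfix : ∀ x : Ω, (∀ s ∈ S, s x = x) → x ∈ (⊥ : IntermediateField K Ω) := by
    intro x hx
    rw [← hbot]
    refine ⟨?_, ?_⟩
    · exact fixed_of_fixingSubgroup_aux L x
        (fun g hg => hx g (Subgroup.subset_closure (Or.inl hg)))
    · exact fixed_of_fixingSubgroup_aux Kinf x
        (fun g hg => hx g (Subgroup.subset_closure (Or.inr hg)))
  rw [Set.eq_univ_iff_forall]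
  intro σ
  rw [mem_closure_iff_nhds]
  intro U hU
  have hU1 : (fun g => σ * g) ⁻¹' U ∈ nhds (1 : Ω ≃ₐ[K] Ω) := by
    rw [← map_mul_left_nhds_one σ] at hU
    exact hU
  obtain ⟨E, hfd, hE⟩ := (krullTopology_mem_nhds_one_iff K Ω _).mp hU1
  haveI := hfd
  haveI : Normal K Ω := IsAlgClosure.normal K Ω
  set E' : IntermediateField K Ω := normalClosure K E Ω with hE'
  haveI : FiniteDimensional K E' := normalClosure.is_finiteDimensional K E Ω
  haveI : Normal K E' := normalClosure.normal K E Ω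
  set res : (Ω ≃ₐ[K] Ω) →* (E' ≃ₐ[K] E') := AlgEquiv.restrictNormalHom E' with hres
  have hH : S.map res = ⊤ := by
    have hff : IntermediateField.fixedField (S.map res) = ⊥ := by
      refine le_antisymm ?_ bot_le
      intro x hxf
      have hfixed : ∀ s ∈ S, s ↑x = ↑x := by
        intro s hs
        have h1 : (res s) x = x := hxf ⟨res s, Subgroup.mem_map_of_mem res hs⟩
        have h2 := AlgEquiv.restrictNormal_commutes s E' x
        rw [show (s.restrictNormal E') x = x from h1] at h2
        exact h2.symm
      have hb := hfix ↑x hfixed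
      rw [IntermediateField.mem_bot] at hb
      obtain ⟨k, hk⟩ := hb
      rw [IntermediateField.mem_bot]
      refine ⟨k, Subtype.ext ?_⟩
      rw [← hk]
      exact (IsScalarTower.algebraMap_apply K E' Ω k).symm
    have h3 := IntermediateField.fixingSubgroup_fixedField (S.map res)
    rw [hff, IntermediateField.fixingSubgroup_bot] at h3
    exact h3.symm
  obtain ⟨τ, hτS, hτ⟩ : ∃ τ ∈ S, res τ = res σ := by
    have : res σ ∈ S.map res := by rw [hH]; trivial
    obtain ⟨τ, h1, h2⟩ := this
    exact ⟨τ, h1, h2⟩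
  refine ⟨τ, ?_, hτS⟩
  have hmem : σ⁻¹ * τ ∈ E.fixingSubgroup := by
    rw [IntermediateField.mem_fixingSubgroup_iff]
    intro y hy
    have hy' : y ∈ E' := IntermediateField.le_normalClosure E hy
    have h1 : τ y = σ y := by
      have ha := AlgEquiv.restrictNormal_commutes τ E' ⟨y, hy'⟩
      have hb := AlgEquiv.restrictNormal_commutes σ E' ⟨y, hy'⟩
      have hc : τ.restrictNormal E' = σ.restrictNormal E' := hτ
      rw [hc] at ha
      rw [show (algebraMap E' Ω) ⟨y, hy'⟩ = y from rfl] at ha hb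
      rw [← ha]; exact hb
    show (σ⁻¹ * τ) y = y
    rw [AlgEquiv.mul_apply, h1]
    exact σ.symm_apply_apply y
  have h4 := hE hmem
  simpa using h4
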